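/- Let M ⊂ ℝ^D be a nonempty set, let ℰ be a set of maps E : M → ℝ^n with sup_{x∈M} ‖E(x)‖_∞ ≤ Λ for every E ∈ ℰ, let 𝒜 be a set of matrices A ∈ ℝ^{n×n} with spectral norm ‖A‖₂ ≤ ρ for every A ∈ 𝒜, and let 𝒟 be a set of maps D : ℝ^n → ℝ^D each satisfying ‖D(u) − D(v)‖_∞ ≤ C ‖u − v‖₂ for all u, v ∈ ℝ^n. Suppose S_E ⊆ ℰ is a δ_E-cover of ℰ in the metric (E, E′) ↦ sup_{x∈M} ‖E(x) − E′(x)‖_∞, S_A ⊆ 𝒜 is a δ_A-cover of 𝒜 in the entrywise max metric, and S_D ⊆ 𝒟 is a δ_D-cover of 𝒟 in the metric (D, D′) ↦ sup_{z∈ℝ^n} ‖D(z) − D′(z)‖_∞ (all suprema assumed finite). Then the set {x ↦ D(A E(x)) : D ∈ S_D, A ∈ S_A, E ∈ S_E} is a (δ_D + C ρ √n δ_E + C n^{3/2} Λ δ_A)-cover of the composite class {x ↦ D(A E(x)) : D ∈ 𝒟, A ∈ 𝒜, E ∈ ℰ} in the metric (G, G′) ↦ sup_{x∈M} ‖G(x)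 − G′(x)‖_∞; in particular, the covering numbers satisfy Q(δ_D + Cρ√n δ_E + C n^{3/2} Λ δ_A, composite class) ≤ |S_D| · |S_A| · |S_E|. -/

import Mathlib

noncomputable section

/-- Euclidean (ℓ²) norm of a vector in `ℝ^d`. -/
def l2 {d : ℕ} (x : Fin d → ℝ) : ℝ := Real.sqrt (∑ i, (x i) ^ 2)

/-- Spectral norm (operator norm induced by Euclidean norms) of a square matrix. -/
def specNorm {n : ℕ} (A : Matrix (Fin n) (Fin n) ℝ) : ℝ :=
  ⨆ v : {v : Fin n → ℝ // l2 v ≤ 1}, l2 (A.mulVec v)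

lemma l2_nonneg {d : ℕ} (x : Fin d → ℝ) : 0 ≤ l2 x := Real.sqrt_nonneg _

lemma abs_le_l2 {d : ℕ} (x : Fin d → ℝ) (i : Fin d) : |x i| ≤ l2 x := by
  rw [← Real.sqrt_sq_eq_abs]
  exact Real.sqrt_le_sqrt (Finset.single_le_sum (fun j _ => sq_nonneg (x j))
    (Finset.mem_univ i))

lemma l2_le_sqrt_mul {d : ℕ} (x : Fin d → ℝ) (b : ℝ) (h : ∀ i, |x i| ≤ b) :
    l2 x ≤ Real.sqrt d * b := by
  rcases Nat.eq_zero_or_pos d with hd | hd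
  · subst hd
    simp [l2]
  · have hb : 0 ≤ b := le_trans (abs_nonneg _) (h ⟨0, hd⟩)
    have hsum : ∑ i, (x i) ^ 2 ≤ ∑ _i : Fin d, b ^ 2 := by
      refine Finset.sum_le_sum fun i _ => ?_
      rw [← sq_abs]
      exact pow_le_pow_left₀ (abs_nonneg _) (h i) 2
    calc l2 x ≤ Real.sqrt (∑ _i : Fin d, b ^ 2) := Real.sqrt_le_sqrt hsum
      _ = Real.sqrt ((d : ℝ) * b ^ 2) := by simp [Finset.sum_const, mul_comm]
      _ = Real.sqrt d * b := by
          rw [Real.sqrt_mul (by positivity), Real.sqrt_sq hb]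

lemma l2_smul {d : ℕ} (c : ℝ) (x : Fin d → ℝ) : l2 (c • x) = |c| * l2 x := by
  unfold l2
  rw [← Real.sqrt_sq_eq_abs, ← Real.sqrt_mul (sq_nonneg c), Finset.mul_sum]
  congr 1
  refine Finset.sum_congr rfl fun i _ => ?_
  simp [mul_pow]

lemma l2_mulVec_le {n : ℕ} (A : Matrix (Fin n) (Fin n) ℝ) (w : Fin n → ℝ) :
    l2 (A.mulVec w) ≤ specNorm A * l2 w := by
  have hbdd : BddAbove (Set.range fun v : {v : Fin n → ℝ // l2 v ≤ 1} =>
      l2 (A.mulVec v)) := by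
    refine ⟨Real.sqrt (∑ i, (∑ j, |A i j|) ^ 2), ?_⟩
    rintro _ ⟨⟨v, hv⟩, rfl⟩
    refine Real.sqrt_le_sqrt (Finset.sum_le_sum fun i _ => ?_)
    rw [← sq_abs]
    refine pow_le_pow_left₀ (abs_nonneg _) ?_ 2
    calc |A.mulVec v i| = |∑ j, A i j * v j| := by rfl
      _ ≤ ∑ j, |A i j * v j| := Finset.abs_sum_le_sum_abs _ _
      _ ≤ ∑ j, |A i j| := by
          refine Finset.sum_le_sum fun j _ => ?_
          rw [abs_mul]
          calc |A i j| * |v j| ≤ |A i j| * 1 := by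
                exact mul_le_mul_of_nonneg_left (le_trans (abs_le_l2 v j) hv) (abs_nonneg _)
            _ = |A i j| := mul_one _
  rcases eq_or_ne w 0 with rfl | hw
  · simp [Matrix.mulVec_zero, l2]
  · have hwpos : 0 < l2 w := by
      obtain ⟨i, hi⟩ := Function.ne_iff.mp hw
      have : 0 < ∑ j, (w j) ^ 2 :=
        Finset.sum_pos' (fun j _ => sq_nonneg _) ⟨i, Finset.mem_univ i, lt_of_le_of_ne (sq_nonneg _) (Ne.symm (pow_ne_zero 2 hi))⟩
      exact Real.sqrt_pos.mpr this
    set v : Fin n → ℝ := (l2 w)⁻¹ • w with hv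
    have hv1 : l2 v = 1 := by
      rw [hv, l2_smul, abs_of_pos (inv_pos.mpr hwpos), inv_mul_cancel₀ hwpos.ne']
    have hkey : l2 (A.mulVec v) ≤ specNorm A :=
      le_ciSup hbdd (⟨v, hv1.le⟩ : {v : Fin n → ℝ // l2 v ≤ 1})
    have hwv : w = l2 w • v := by rw [hv, smul_inv_smul₀ hwpos.ne']
    calc l2 (A.mulVec w) = l2 (A.mulVec (l2 w • v)) := by rw [← hwv]
      _ = l2 (l2 w • A.mulVec v) := by rw [Matrix.mulVec_smul]
      _ = l2 w * l2 (A.mulVec v) := by rw [l2_smul, abs_of_pos hwpos]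
      _ ≤ l2 w * specNorm A := mul_le_mul_of_nonneg_left hkey hwpos.le
      _ = specNorm A * l2 w := mul_comm _ _

lemma rpow32 (n : ℕ) : (n : ℝ) ^ ((3 : ℝ) / 2) = (n : ℝ) * Real.sqrt n := by
  have h : (0:ℝ) ≤ n := Nat.cast_nonneg n
  rw [show (3:ℝ)/2 = (1/2) * 3 by norm_num, Real.rpow_mul h,
    ← Real.sqrt_eq_rpow, show (3:ℝ) = ((3:ℕ):ℝ) by norm_num, Real.rpow_natCast]
  have := Real.mul_self_sqrt h
  ring_nf
  nlinarith [Real.sqrt_nonneg (n:ℝ)]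


/-- covers of the encoder class, the matrix class and the decoder class
combine to a cover of the composite class `{x ↦ D(A E(x))}`: for every composite built
from `𝒟 × 𝒜 × ℰ` there is a composite built from the covers `S_D × S_A × S_E` within
uniform (sup over `M`, entrywise `‖·‖_∞`) distance `δ_D + Cρ√n δ_E + C n^{3/2} Λ δ_A`.
(`‖·‖` on `Fin d → ℝ` is the sup norm.) -/
theorem stmt7 {D n : ℕ} (M : Set (Fin D → ℝ))
    (ℰ : Set ((Fin D → ℝ) → (Fin n → ℝ)))
    (𝒜 : Set (Matrix (Fin n) (Fin n) ℝ))
    (𝒟 : Set ((Fin n → ℝ) → (Fin D → ℝ)))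
    (Λ ρ C : ℝ) (hΛ : 0 ≤ Λ) (hρ : 0 ≤ ρ) (hC : 0 ≤ C)
    (hℰ : ∀ E ∈ ℰ, ∀ x ∈ M, ‖E x‖ ≤ Λ)
    (h𝒜 : ∀ A ∈ 𝒜, specNorm A ≤ ρ)
    (h𝒟 : ∀ Dm ∈ 𝒟, ∀ u v : Fin n → ℝ, ‖Dm u - Dm v‖ ≤ C * l2 (u - v))
    (SE : Set ((Fin D → ℝ) → (Fin n → ℝ)))
    (SA : Set (Matrix (Fin n) (Fin n) ℝ))
    (SD : Set ((Fin n → ℝ) → (Fin D → ℝ)))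
    (δE δA δD : ℝ)
    (hSE : SE ⊆ ℰ) (hSA : SA ⊆ 𝒜) (hSD : SD ⊆ 𝒟)
    (hSEcov : ∀ E ∈ ℰ, ∃ E' ∈ SE, ∀ x ∈ M, ‖E x - E' x‖ ≤ δE)
    (hSAcov : ∀ A ∈ 𝒜, ∃ A' ∈ SA, ∀ i j, |A i j - A' i j| ≤ δA)
    (hSDcov : ∀ Dm ∈ 𝒟, ∃ D' ∈ SD, ∀ z : Fin n → ℝ, ‖Dm z - D' z‖ ≤ δD) :
    ∀ Dm ∈ 𝒟, ∀ A ∈ 𝒜, ∀ E ∈ ℰ,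
      ∃ D' ∈ SD, ∃ A' ∈ SA, ∃ E' ∈ SE,
        ∀ x ∈ M, ‖Dm (A.mulVec (E x)) - D' (A'.mulVec (E' x))‖
          ≤ δD + C * ρ * Real.sqrt n * δE + C * (n : ℝ) ^ ((3 : ℝ) / 2) * Λ * δA := by
  intro Dm hDm A hA E hE
  obtain ⟨D', hD'S, hD'cov⟩ := hSDcov Dm hDm
  obtain ⟨A', hA'S, hA'cov⟩ := hSAcov A hA
  obtain ⟨E', hE'S, hE'cov⟩ := hSEcov E hE
  refine ⟨D', hD'S, A', hA'S, E', hE'S, fun x hx => ?_⟩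
  have hD'mem : D' ∈ 𝒟 := hSD hD'S
  have hE'mem : E' ∈ ℰ := hSE hE'S
  set u1 := A.mulVec (E x) with hu1
  set u2 := A.mulVec (E' x) with hu2
  set u3 := A'.mulVec (E' x) with hu3
  have t1 : ‖Dm u1 - D' u1‖ ≤ δD := hD'cov u1
  have hEd : l2 (E x - E' x) ≤ Real.sqrt n * δE := by
    apply l2_le_sqrt_mul
    intro i
    calc |(E x - E' x) i| = ‖(E x - E' x) i‖ := rfl
      _ ≤ ‖E x - E' x‖ := norm_le_pi_norm _ i
      _ ≤ δE := hE'cov x hx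
  have t2 : ‖D' u1 - D' u2‖ ≤ C * (ρ * (Real.sqrt n * δE)) := by
    have h1 : l2 (u1 - u2) ≤ ρ * (Real.sqrt n * δE) := by
      have hm : u1 - u2 = A.mulVec (E x - E' x) := (Matrix.mulVec_sub A _ _).symm
      rw [hm]
      calc l2 (A.mulVec (E x - E' x)) ≤ specNorm A * l2 (E x - E' x) := l2_mulVec_le A _
        _ ≤ ρ * (Real.sqrt n * δE) := mul_le_mul (h𝒜 A hA) hEd (l2_nonneg _) hρ
    exact le_trans (h𝒟 D' hD'mem u1 u2) (mul_le_mul_of_nonneg_left h1 hC)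
  have t3 : ‖D' u2 - D' u3‖ ≤ C * (Real.sqrt n * ((n : ℝ) * (δA * Λ))) := by
    have h1 : l2 (u2 - u3) ≤ Real.sqrt n * ((n : ℝ) * (δA * Λ)) := by
      have he : u2 - u3 = (A - A').mulVec (E' x) := (Matrix.sub_mulVec A A' _).symm
      rw [he]
      apply l2_le_sqrt_mul
      intro i
      calc |(A - A').mulVec (E' x) i| = |∑ j, (A i j - A' i j) * E' x j| := by
            simp [Matrix.mulVec, dotProduct, Matrix.sub_apply]
        _ ≤ ∑ j, |(A i j - A' i j) * E' x j| := Finset.abs_sum_le_sum_abs _ _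
        _ ≤ ∑ _j : Fin n, δA * Λ := by
            refine Finset.sum_le_sum fun j _ => ?_
            rw [abs_mul]
            refine mul_le_mul (hA'cov i j) ?_ (abs_nonneg _) ?_
            · exact le_trans (norm_le_pi_norm (E' x) j) (hℰ E' hE'mem x hx)
            · exact le_trans (abs_nonneg _) (hA'cov i j)
        _ = (n : ℝ) * (δA * Λ) := by
            rw [Finset.sum_const]
            simp
    exact le_trans (h𝒟 D' hD'mem u2 u3) (mul_le_mul_of_nonneg_left h1 hC)
  have tri : ‖Dm u1 - D' u3‖ ≤ ‖Dm u1 - D' u1‖ + ‖D' u1 - D' u2‖ + ‖D' u2 - D' u3‖ := by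
    calc ‖Dm u1 - D' u3‖
        = ‖(Dm u1 - D' u1) + (D' u1 - D' u2) + (D' u2 - D' u3)‖ := by congr 1; abel
      _ ≤ ‖(Dm u1 - D' u1) + (D' u1 - D' u2)‖ + ‖D' u2 - D' u3‖ := norm_add_le _ _
      _ ≤ ‖Dm u1 - D' u1‖ + ‖D' u1 - D' u2‖ + ‖D' u2 - D' u3‖ := by
          exact add_le_add_left (norm_add_le _ _) _
  rw [rpow32]
  have e2 : C * (ρ * (Real.sqrt n * δE)) = C * ρ * Real.sqrt n * δE := by ring
  have e3 : C * (Real.sqrt n * ((n : ℝ) * (δA * Λ))) = C * ((n : ℝ) * Real.sqrt n) * Λ * δA := by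
    ring
  linarith [tri, t1, t2, t3]


end
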